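/- Let κ be an uncountable regular cardinal and let f : X → Y be a map of types such that X and Y are κ-presentable objects of Type. Then the pullback functor f^* : Over Y → Over X, sending (A → Y) to the pullback A ×_Y X → X, sends κ-presentable objects of Over Y to κ-presentable objects of Over X. -/

import Mathlib

universe w v u u'

open CategoryTheory Limits Opposite

/-- A small category `J` is `κ`-filtered if every diagram in it indexed by a category with
fewer than `κ` objects and fewer than `κ` arrows admits a cocone. -/
def IsCardFiltered (J : Type w) [SmallCategory J] (κ : Cardinal.{w}) : Prop :=
  ∀ (A : Type w) [SmallCategory A], ∀ (F : A ⥤ J),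
    Cardinal.mk A < κ → Cardinal.mk (Arrow A) < κ → Nonempty (Limits.Cocone F)

/-- An object `X` of a locally small category `C` is `κ`-presentable if the functor
`Hom(X, -) : C ⥤ Type` preserves colimits of (small) `κ`-filtered diagrams. -/
def IsCardPresentable {C : Type u} [Category.{v} C] (κ : Cardinal.{v}) (X : C) : Prop :=
  ∀ (J : Type v) [SmallCategory J], IsCardFiltered J κ →
    PreservesColimitsOfShape J (coyoneda.obj (op X))



/-- `Arrow C` as a sigma type. -/
def arrowEquivSigma (C : Type u) [Category.{v} C] : Arrow C ≃ Σ (X Y : C), X ⟶ Y where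
  toFun f := ⟨f.left, f.right, f.hom⟩
  invFun s := Arrow.mk s.2.2
  left_inv f := rfl
  right_inv s := rfl

instance arrowFinite (C : Type u) [Category.{v} C] [Finite C] [∀ X Y : C, Finite (X ⟶ Y)] :
    Finite (Arrow C) :=
  Finite.of_equiv _ (arrowEquivSigma C).symm

lemma mk_arrow_le_of_thin (C : Type u) [SmallCategory C] [Quiver.IsThin C] :
    Cardinal.mk (Arrow C) ≤ Cardinal.mk C * Cardinal.mk C := by
  rw [Cardinal.mk_congr (arrowEquivSigma C)]
  have : Function.Injective (fun s : Σ (X Y : C), X ⟶ Y => (s.1, s.2.1)) := by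
    rintro ⟨X, Y, f⟩ ⟨X', Y', f'⟩ h
    simp only [Prod.mk.injEq] at h
    obtain ⟨rfl, rfl⟩ := h
    rw [Subsingleton.elim f f']
  calc Cardinal.mk (Σ (X Y : C), X ⟶ Y) ≤ Cardinal.mk (C × C) :=
        Cardinal.mk_le_of_injective this
    _ = Cardinal.mk C * Cardinal.mk C := by simp [Cardinal.mk_prod]

lemma isFiltered_of_isCardFiltered {J : Type u} [SmallCategory J] {κ : Cardinal.{u}}
    (hJ : IsCardFiltered J κ) (hκ' : Cardinal.aleph0 < κ) : IsFiltered J := by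
  apply IsFiltered.of_cocone_nonempty.{u}
  intro A _ _ F
  haveI : Finite A := Fintype.finite (FinCategory.fintypeObj (J := A))
  haveI : ∀ X Y : A, Finite (X ⟶ Y) := fun X Y => Fintype.finite (FinCategory.fintypeHom X Y)
  exact hJ A F ((Cardinal.lt_aleph0_iff_finite.mpr inferInstance).trans hκ') ((Cardinal.lt_aleph0_iff_finite.mpr inferInstance).trans hκ')

variable (κ : Cardinal.{u})

/-- The poset of subsets of `Z` of cardinality `< κ`. -/
def kSub (Z : Type u) : Type u := {S : Set Z // Cardinal.mk S < κ}

instance (Z : Type u) : Preorder (kSub κ Z) := Subtype.preorder _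

instance (Z : Type u) : SmallCategory (kSub κ Z) := Preorder.smallCategory _

variable {Z : Type u}

def kSing (h1 : (1 : Cardinal.{u}) < κ) (z : Z) : kSub κ Z :=
  ⟨{z}, by simpa using h1⟩

/-- The diagram of subsets of `Z` of cardinality `< κ`. -/
def kSubD (Z : Type u) : kSub κ Z ⥤ Type u where
  obj S := S.1
  map {S T} f := TypeCat.ofHom fun x => ⟨x.1, leOfHom f x.2⟩

def kSubCocone (Z : Type u) : Cocone (kSubD κ Z) where
  pt := Z
  ι := { app := fun S => TypeCat.ofHom fun x => x.1, naturality := fun _ _ _ => rfl }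

noncomputable def kSubIsColimit (h1 : (1 : Cardinal.{u}) < κ) (Z : Type u) :
    IsColimit (kSubCocone κ Z) where
  desc s := TypeCat.ofHom fun z => s.ι.app (kSing κ h1 z) ⟨z, Set.mem_singleton z⟩
  fac s S := by
    ext x
    have hle : kSing κ h1 x.1 ⟶ S := homOfLE (Set.singleton_subset_iff.mpr x.2)
    have := types_congr_hom (s.ι.naturality hle) ⟨x.1, Set.mem_singleton _⟩
    dsimp [kSubD, kSubCocone] at this ⊢
    exact this.symm
  uniq s m hm := by
    ext z
    exact types_congr_hom (hm (kSing κ h1 z)) ⟨z, Set.mem_singleton z⟩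

lemma kSub_isCardFiltered (hκ : κ.IsRegular) (Z : Type u) :
    IsCardFiltered (kSub κ Z) κ := by
  intro A _ F hA _
  refine ⟨⟨⟨⋃ a : A, (F.obj a).1, ?_⟩,
    { app := fun a => homOfLE (Set.subset_iUnion (fun a : A => (F.obj a).1) a),
      naturality := fun _ _ _ => Subsingleton.elim _ _ }⟩⟩
  exact Cardinal.mk_iUnion_le_sum_mk.trans_lt
    (Cardinal.sum_lt_of_isRegular hκ hA fun a => (F.obj a).2)

lemma card_lt_of_presentable {κ : Cardinal.{u}} (hκ : κ.IsRegular)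
    (hκ' : Cardinal.aleph0 < κ) {Z : Type u} (h : IsCardPresentable κ Z) :
    Cardinal.mk Z < κ := by
  have h1 : (1 : Cardinal.{u}) < κ := Cardinal.one_lt_aleph0.trans hκ'
  haveI := h (kSub κ Z) (kSub_isCardFiltered κ hκ Z)
  have hc : IsColimit ((coyoneda.obj (op Z)).mapCocone (kSubCocone κ Z)) :=
    isColimitOfPreserves _ (kSubIsColimit κ h1 Z)
  obtain ⟨S, u, hu⟩ := Types.jointly_surjective _ hc (𝟙 Z)
  change Z ⟶ S.1 at u
  have hz : ∀ z : Z, (u z).1 = z := fun z => types_congr_hom hu z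
  have hinj : Function.Injective u := fun a b hab => by
    rw [← hz a, ← hz b, hab]
  exact (Cardinal.mk_le_of_injective hinj).trans_lt S.2

section OverDiagram

variable (κ : Cardinal.{u}) {B : Type u} (W : Over B)

/-- The diagram of restrictions of `W` to subsets of `W.left` of cardinality `< κ`. -/
def kOverD : kSub κ W.left ⥤ Over B where
  obj S := Over.mk (TypeCat.ofHom fun x : S.1 => W.hom x.1)
  map {S T} f := Over.homMk (TypeCat.ofHom fun x : S.1 => (⟨x.1, leOfHom f x.2⟩ : T.1)) rfl

def kOverCocone : Cocone (kOverD κ W) where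
  pt := W
  ι := { app := fun S => Over.homMk (TypeCat.ofHom fun x : S.1 => x.1) rfl,
         naturality := fun _ _ _ => by ext x; rfl }

noncomputable def kOverIsColimit (h1 : (1 : Cardinal.{u}) < κ) :
    IsColimit (kOverCocone κ W) where
  desc s := Over.homMk
    (TypeCat.ofHom fun z => (s.ι.app (kSing κ h1 z)).left ⟨z, Set.mem_singleton z⟩)
    (by
      ext z
      exact types_congr_hom (Over.w (s.ι.app (kSing κ h1 z))) ⟨z, Set.mem_singleton z⟩)
  fac s S := by
    ext (x : S.1)
    have hle : kSing κ h1 x.1 ⟶ S := homOfLE (Set.singleton_subset_iff.mpr x.2)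
    have := types_congr_hom (congrArg CommaMorphism.left (s.ι.naturality hle))
      ⟨x.1, Set.mem_singleton _⟩
    dsimp [kOverD, kOverCocone] at this ⊢
    exact this.symm
  uniq s m hm := by
    ext (z : W.left)
    exact types_congr_hom (congrArg CommaMorphism.left (hm (kSing κ h1 z))) ⟨z, Set.mem_singleton z⟩

end OverDiagram

lemma over_card_lt_of_presentable {κ : Cardinal.{u}} (hκ : κ.IsRegular)
    (hκ' : Cardinal.aleph0 < κ) {B : Type u} (W : Over B)
    (h : IsCardPresentable κ W) : Cardinal.mk W.left < κ := by
  have h1 : (1 : Cardinal.{u}) < κ := Cardinal.one_lt_aleph0.trans hκ'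
  haveI := h (kSub κ W.left) (kSub_isCardFiltered κ hκ W.left)
  have hc : IsColimit ((coyoneda.obj (op W)).mapCocone (kOverCocone κ W)) :=
    isColimitOfPreserves _ (kOverIsColimit κ W h1)
  obtain ⟨S, u, hu⟩ := Types.jointly_surjective _ hc (𝟙 W)
  have hu' : u ≫ (kOverCocone κ W).ι.app S = 𝟙 W := hu
  have hz : ∀ z : W.left, (u.left z).1 = z := fun z =>
    types_congr_hom (congrArg CommaMorphism.left hu') z
  have hinj : Function.Injective u.left := fun a b hab => by
    rw [← hz a, ← hz b, hab]
  exact (Cardinal.mk_le_of_injective hinj).trans_lt S.2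

lemma presentable_of_card_lt {κ : Cardinal.{u}} (hκ' : Cardinal.aleph0 < κ)
    {B : Type u} (W : Over B) (hW : Cardinal.mk W.left < κ) :
    IsCardPresentable κ W := by
  intro J _ hJ
  haveI hfil : IsFiltered J := isFiltered_of_isCardFiltered hJ hκ'
  constructor
  intro F
  constructor
  intro c hc
  have hc' : IsColimit ((Over.forget B).mapCocone c) :=
    isColimitOfPreserves (Over.forget B) hc
  refine ⟨Types.FilteredColimit.isColimitOf _ _ ?_ ?_⟩
  · -- surjectivity
    intro u
    have hch : ∀ a : W.left, ∃ (j : J) (y : (F.obj j).left),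
        (c.ι.app j).left y = u.left a := fun a =>
      Types.jointly_surjective _ hc' (u.left a)
    choose jj yy hyy using hch
    obtain ⟨d⟩ := hJ (Discrete W.left) (Discrete.functor jj)
      ((Cardinal.mk_congr CategoryTheory.discreteEquiv).le.trans_lt hW)
      (by
        haveI : Quiver.IsThin (Discrete W.left) := fun _ _ => inferInstance
        refine (mk_arrow_le_of_thin (Discrete W.left)).trans_lt ?_
        rw [Cardinal.mk_congr CategoryTheory.discreteEquiv]
        exact Cardinal.mul_lt_of_lt hκ'.le hW hW)
    have key : ∀ a : W.left,
        (c.ι.app d.pt).left ((F.map (d.ι.app ⟨a⟩)).left (yy a)) = u.left a := by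
      intro a
      rw [← hyy a]
      exact types_congr_hom (congrArg CommaMorphism.left (c.w (d.ι.app ⟨a⟩))) (yy a)
    refine ⟨d.pt, Over.homMk (TypeCat.ofHom fun a => (F.map (d.ι.app ⟨a⟩)).left (yy a)) ?_, ?_⟩
    · ext a
      calc (F.obj d.pt).hom ((F.map (d.ι.app ⟨a⟩)).left (yy a))
          = c.pt.hom ((c.ι.app d.pt).left ((F.map (d.ι.app ⟨a⟩)).left (yy a))) :=
            (types_congr_hom (Over.w (c.ι.app d.pt)) _).symm
        _ = c.pt.hom (u.left a) := by rw [key a]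
        _ = W.hom a := types_congr_hom (Over.w u) a
    · exact (Over.OverMorphism.ext (by ext a; exact (key a).symm))
  · -- injectivity
    intro i j ui uj hij
    have hij' : ui ≫ c.ι.app i = uj ≫ c.ι.app j := hij
    set l := IsFiltered.leftToMax i j
    set r := IsFiltered.rightToMax i j
    set k₀ := IsFiltered.max i j with hk₀
    set u₁ : W ⟶ F.obj k₀ := ui ≫ F.map l with hu₁
    set u₂ : W ⟶ F.obj k₀ := uj ≫ F.map r with hu₂
    have h12 : ∀ a : W.left,
        (c.ι.app k₀).left (u₁.left a) = (c.ι.app k₀).left (u₂.left a) := by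
      intro a
      have e1 : u₁ ≫ c.ι.app k₀ = ui ≫ c.ι.app i := by
        rw [hu₁, Category.assoc, c.w l]
      have e2 : u₂ ≫ c.ι.app k₀ = uj ≫ c.ι.app j := by
        rw [hu₂, Category.assoc, c.w r]
      exact types_congr_hom (congrArg CommaMorphism.left (e1.trans (hij'.trans e2.symm))) a
    have key : ∀ a : W.left, ∃ (k : J) (h : k₀ ⟶ k),
        (F.map h).left (u₁.left a) = (F.map h).left (u₂.left a) := by
      intro a
      obtain ⟨k, f, g, hfg⟩ :=
        (Types.FilteredColimit.isColimit_eq_iff _ hc' (i := k₀) (j := k₀)).mp (h12 a)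
      refine ⟨_, f ≫ IsFiltered.coeqHom f g, ?_⟩
      have hcoeq := IsFiltered.coeq_condition f g
      calc (F.map (f ≫ IsFiltered.coeqHom f g)).left (u₁.left a)
          = (F.map (IsFiltered.coeqHom f g)).left ((F.map f).left (u₁.left a)) := by
            rw [F.map_comp]; rfl
        _ = (F.map (IsFiltered.coeqHom f g)).left ((F.map g).left (u₂.left a)) :=
            congrArg (F.map (IsFiltered.coeqHom f g)).left hfg
        _ = (F.map (g ≫ IsFiltered.coeqHom f g)).left (u₂.left a) := by
            rw [F.map_comp]; rfl
        _ = (F.map (f ≫ IsFiltered.coeqHom f g)).left (u₂.left a) := by rw [← hcoeq]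
    choose kk hk hhk using key
    obtain ⟨d⟩ := hJ (WidePushoutShape W.left) (WidePushoutShape.wideSpan k₀ kk hk)
      (by
        have : Cardinal.mk (WidePushoutShape W.left) = Cardinal.mk W.left + 1 := by
          exact Cardinal.mk_option
        rw [this]
        exact Cardinal.add_lt_of_lt hκ'.le hW (Cardinal.one_lt_aleph0.trans hκ'))
      (by
        refine (mk_arrow_le_of_thin (WidePushoutShape W.left)).trans_lt ?_
        have h1 : Cardinal.mk (WidePushoutShape W.left) < κ := by
          have : Cardinal.mk (WidePushoutShape W.left) = Cardinal.mk W.left + 1 :=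
            Cardinal.mk_option
          rw [this]
          exact Cardinal.add_lt_of_lt hκ'.le hW (Cardinal.one_lt_aleph0.trans hκ')
        exact Cardinal.mul_lt_of_lt hκ'.le h1 h1)
    have hna : ∀ a : W.left, hk a ≫ d.ι.app (Option.some a) = d.ι.app Option.none := by
      intro a
      have := d.w (WidePushoutShape.Hom.init a)
      exact this
    refine ⟨d.pt, l ≫ d.ι.app Option.none, r ≫ d.ι.app Option.none, ?_⟩
    show ui ≫ F.map (l ≫ d.ι.app Option.none) = uj ≫ F.map (r ≫ d.ι.app Option.none)
    have goal' : u₁ ≫ F.map (d.ι.app Option.none) = u₂ ≫ F.map (d.ι.app Option.none) := by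
      ext a
      have e1 : (F.map (d.ι.app Option.none)).left (u₁.left a)
          = (F.map (d.ι.app (Option.some a))).left ((F.map (hk a)).left (u₁.left a)) := by
        rw [← hna a]; exact types_congr_hom (congrArg CommaMorphism.left (F.map_comp (hk a) (d.ι.app (Option.some a)))) _
      have e2 : (F.map (d.ι.app Option.none)).left (u₂.left a)
          = (F.map (d.ι.app (Option.some a))).left ((F.map (hk a)).left (u₂.left a)) := by
        rw [← hna a]; exact types_congr_hom (congrArg CommaMorphism.left (F.map_comp (hk a) (d.ι.app (Option.some a)))) _
      show (F.map (d.ι.app Option.none)).left (u₁.left a)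
          = (F.map (d.ι.app Option.none)).left (u₂.left a)
      rw [e1, e2, hhk a]
    calc ui ≫ F.map (l ≫ d.ι.app Option.none)
        = u₁ ≫ F.map (d.ι.app Option.none) := by exact (congrArg (ui ≫ ·) (F.map_comp l (d.ι.app Option.none))).trans (Category.assoc _ _ _).symm
      _ = u₂ ≫ F.map (d.ι.app Option.none) := goal'
      _ = uj ≫ F.map (r ≫ d.ι.app Option.none) := by exact ((congrArg (uj ≫ ·) (F.map_comp r (d.ι.app Option.none))).trans (Category.assoc _ _ _).symm).symm

/-- For an uncountable regular cardinal `κ` and a map `f : X → Y` between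
`κ`-presentable types, the pullback functor `Over Y ⥤ Over X` preserves
`κ`-presentable objects. -/
theorem stmt12 (κ : Cardinal.{u}) (hκ : κ.IsRegular) (hκ' : Cardinal.aleph0 < κ)
    {X Y : Type u} (f : X ⟶ Y)
    (hX : IsCardPresentable κ X) (hY : IsCardPresentable κ Y) :
    ∀ T : Over Y, IsCardPresentable κ T →
      IsCardPresentable κ ((Over.pullback f).obj T) := by
  intro T hT
  have hX' : Cardinal.mk X < κ := card_lt_of_presentable hκ hκ' hX
  have hT' : Cardinal.mk T.left < κ := over_card_lt_of_presentable hκ hκ' T hT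
  apply presentable_of_card_lt hκ'
  show Cardinal.mk (pullback T.hom f) < κ
  calc Cardinal.mk (pullback T.hom f)
      = Cardinal.mk (Types.PullbackObj T.hom f) :=
        Cardinal.mk_congr (Types.pullbackIsoPullback T.hom f).toEquiv
    _ ≤ Cardinal.mk (T.left × X) := Cardinal.mk_subtype_le _
    _ < κ := by
        rw [Cardinal.mk_prod, Cardinal.lift_id, Cardinal.lift_id]
        exact Cardinal.mul_lt_of_lt hκ'.le hT' hX'
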